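/- A graph G of order n is Hamilton-connected if and only if its (n+1)-closure cl_{n+1}(G) is Hamilton-connected. -/

import Mathlib

open Classical SimpleGraph

noncomputable section

/-- Degree of a vertex (via `Set.ncard`, avoiding decidability assumptions). -/
noncomputable def gdeg {V : Type*} (G : SimpleGraph V) (v : V) : ℕ :=
  (G.neighborSet v).ncard

/-- A graph is Hamilton-connected if every two distinct vertices are joined by a
Hamiltonian path. -/
def HamConnected {V : Type*} (G : SimpleGraph V) : Prop :=
  ∀ u v : V, u ≠ v → ∃ p : G.Walk u v, p.IsHamiltonian

/-- One closure step: simultaneously join all nonadjacent pairs with degree sum ≥ k. -/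
noncomputable def closureStep {V : Type*} (k : ℕ) (G : SimpleGraph V) : SimpleGraph V :=
  G ⊔ SimpleGraph.fromRel (fun u v => ¬ G.Adj u v ∧ k ≤ gdeg G u + gdeg G v)

/-- The `k`-closure of a graph: repeatedly join nonadjacent pairs of vertices with
degree sum at least `k` until no such pair remains. -/
noncomputable def kClosure {V : Type*} [Fintype V] (k : ℕ) (G : SimpleGraph V) : SimpleGraph V :=
  (closureStep k)^[Fintype.card V * Fintype.card V] G

namespace BC

variable {V : Type*}

/-- A Hamiltonian `x`–`y` path presented as a list of vertices. -/
def HamList (G : SimpleGraph V) (x y : V) (l : List V) : Prop :=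
  l.Chain' G.Adj ∧ l.Nodup ∧ (∀ w, w ∈ l) ∧ l.head? = some x ∧ l.getLast? = some y

lemma exists_walk_of_chain (G : SimpleGraph V) :
    ∀ (l : List V) (a b : V), List.Chain G.Adj a (l ++ [b]) →
      ∃ p : G.Walk a b, p.support = a :: (l ++ [b]) := by
  intro l
  induction l with
  | nil =>
    intro a b h
    rw [List.nil_append] at h
    have h : G.Adj a b := (List.isChain_cons_cons.1 h).1
    exact ⟨SimpleGraph.Walk.cons h SimpleGraph.Walk.nil, by simp⟩
  | cons c l ih =>
    intro a b h
    rw [List.cons_append] at h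
    have h : G.Adj a c ∧ List.Chain G.Adj c (l ++ [b]) := List.isChain_cons_cons.1 h
    obtain ⟨p, hp⟩ := ih c b h.2
    exact ⟨SimpleGraph.Walk.cons h.1 p, by simp [hp]⟩

lemma hamList_iff (G : SimpleGraph V) (x y : V) (hxy : x ≠ y) :
    (∃ l, HamList G x y l) ↔ ∃ p : G.Walk x y, p.IsHamiltonian := by
  constructor
  · rintro ⟨l, hc, hnd, hmem, hhd, hlast⟩
    obtain ⟨t, rfl⟩ : ∃ t, l = x :: t := by
      cases l with
      | nil => simp at hhd
      | cons a t =>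
        simp only [List.head?_cons, Option.some.injEq] at hhd
        exact ⟨t, by rw [hhd]⟩
    rcases List.eq_nil_or_concat t with rfl | ⟨t', c, rfl⟩
    · simp at hlast; subst hlast; exact absurd rfl hxy
    · rw [List.concat_eq_append] at *
      have hc' : c = y := by
        rw [List.getLast?_eq_getLast (by simp), Option.some.injEq,
          List.getLast_cons (by simp), List.getLast_append] at hlast
        exact hlast
      subst hc'
      obtain ⟨p, hp⟩ := exists_walk_of_chain G t' x _ hc
      refine ⟨p, fun w => ?_⟩
      rw [hp]
      exact List.count_eq_one_of_mem (hp ▸ hnd) (hp ▸ hmem w)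
  · rintro ⟨p, hp⟩
    refine ⟨p.support, p.isChain_adj_support, hp.isPath.support_nodup, hp.mem_support, ?_, ?_⟩
    · rw [List.head?_eq_head p.support_ne_nil, p.head_support]
    · rw [List.getLast?_eq_getLast p.support_ne_nil, p.getLast_support]

lemma rotate_lemma (H : SimpleGraph V) (l : List V) (d : V) (p q : ℕ)
    (hpq : p < q) (hq : q + 1 < l.length)
    (hA : ∀ t, t < p → H.Adj (l.getD t d) (l.getD (t+1) d))
    (hB : H.Adj (l.getD p d) (l.getD q d))
    (hC : ∀ t, p < t → t < q → H.Adj (l.getD (t+1) d) (l.getD t d))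
    (hD : H.Adj (l.getD (p+1) d) (l.getD (q+1) d))
    (hE : ∀ t, q < t → t + 1 < l.length → H.Adj (l.getD t d) (l.getD (t+1) d)) :
    ∃ l' : List V, l'.Chain' H.Adj ∧ l'.Perm l ∧
      l'.head? = l.head? ∧ l'.getLast? = l.getLast? := by
  classical
  set n := l.length with hn
  set g : ℕ → V := fun i => l.getD i d with hgdef
  set l₁ := l.take (p+1) with hl₁
  set m := (l.drop (p+1)).take (q-p) with hm
  set l₂ := m.reverse with hl₂
  set l₃ := l.drop (q+1) with hl₃
  have hlen1 : l₁.length = p + 1 := by simp only [hl₁, List.length_take]; omega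
  have hlenm : m.length = q - p := by
    simp only [hm, List.length_take, List.length_drop]; omega
  have hlen2 : l₂.length = q - p := by simp only [hl₂, List.length_reverse, hlenm]
  have hlen3 : l₃.length = n - (q+1) := by simp only [hl₃, List.length_drop, hn]
  have hg1 : ∀ i (h : i < p + 1), l₁[i]'(by omega) = g i := by
    intro i h
    have h' : i < n := by omega
    exact List.getElem_take.trans (List.getD_eq_getElem l d h').symm
  have hgm : ∀ i (h : i < q - p), m[i]'(by omega) = g (p+1+i) := by
    intro i h
    have h' : p+1+i < n := by omega
    exact (List.getElem_take.trans List.getElem_drop).trans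
      (List.getD_eq_getElem l d h').symm
  have hg2 : ∀ i (h : i < q - p), l₂[i]'(by omega) = g (q-i) := by
    intro i h
    rw [show l₂[i]'(by omega) = m[m.length-1-i]'(by omega) from List.getElem_reverse _,
      hgm _ (by omega)]
    congr 1
    omega
  have hg3 : ∀ i (h : i < n - (q+1)), l₃[i]'(by omega) = g (q+1+i) := by
    intro i h
    have h' : q+1+i < n := by omega
    exact List.getElem_drop.trans (List.getD_eq_getElem l d h').symm
  refine ⟨l₁ ++ (l₂ ++ l₃), ?_, ?_, ?_, ?_⟩
  · show List.IsChain H.Adj (l₁ ++ (l₂ ++ l₃))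
    rw [List.isChain_append]
    refine ⟨?_, ?_, ?_⟩
    · rw [List.isChain_iff_getElem]
      intro i hi
      rw [hlen1] at hi
      rw [hg1 i (by omega), hg1 (i+1) (by omega)]
      exact hA i (by omega)
    · rw [List.isChain_append]
      refine ⟨?_, ?_, ?_⟩
      · rw [List.isChain_iff_getElem]
        intro i hi
        rw [hlen2] at hi
        rw [hg2 i (by omega), hg2 (i+1) (by omega)]
        have := hC (q-i-1) (by omega) (by omega)
        rw [show q - i - 1 + 1 = q - i from by omega] at this
        rw [show q - (i+1) = q - i - 1 from by omega]
        exact this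
      · rw [List.isChain_iff_getElem]
        intro i hi
        rw [hlen3] at hi
        rw [hg3 i (by omega), hg3 (i+1) (by omega)]
        have := hE (q+1+i) (by omega) (by omega)
        rw [show q+1+(i+1) = q+1+i+1 from by omega]
        exact this
      · intro a ha b hb
        have h2pos : 0 < l₂.length := by omega
        have h3pos : 0 < l₃.length := by omega
        rw [List.getLast?_eq_getElem?, List.getElem?_eq_getElem (by omega : l₂.length - 1 < l₂.length)] at ha
        rw [List.head?_eq_getElem?, List.getElem?_eq_getElem h3pos] at hb
        simp only [Option.mem_def, Option.some.injEq] at ha hb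
        rw [← ha, ← hb]
        rw [hg2 (l₂.length - 1) (by omega), hg3 0 (by omega)]
        rw [show q - (l₂.length - 1) = p + 1 from by omega,
          show q + 1 + 0 = q + 1 from by omega]
        exact hD
    · intro a ha b hb
      have h1pos : 0 < l₁.length := by omega
      have h2pos : 0 < l₂.length := by omega
      rw [List.getLast?_eq_getElem?, List.getElem?_eq_getElem (by omega : l₁.length - 1 < l₁.length)] at ha
      rw [List.head?_append, List.head?_eq_getElem?, List.getElem?_eq_getElem h2pos] at hb
      rw [show ((some (l₂[0]'h2pos)).or l₃.head?) = some (l₂[0]'h2pos) from rfl] at hb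
      simp only [Option.mem_def, Option.some.injEq] at ha hb
      rw [← ha, ← hb]
      rw [hg1 (l₁.length - 1) (by omega), hg2 0 (by omega)]
      rw [show l₁.length - 1 = p from by omega, show q - 0 = q from by omega]
      exact hB
  · have hsplit : l = l₁ ++ (m ++ l₃) := by
      rw [hl₁, hm, hl₃]
      conv_lhs => rw [← List.take_append_drop (p+1) l]
      congr 1
      conv_lhs => rw [← List.take_append_drop (q-p) (l.drop (p+1))]
      congr 1
      rw [List.drop_drop]
      congr 1
      omega
    conv_rhs => rw [hsplit]
    exact List.Perm.append_left _ (List.Perm.append (List.reverse_perm m) (List.Perm.refl _))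
  · have h1pos : 0 < l₁.length := by omega
    rw [List.head?_append, List.head?_eq_getElem?, List.getElem?_eq_getElem h1pos]
    rw [show ((some (l₁[0]'h1pos)).or (l₂ ++ l₃).head?) = some (l₁[0]'h1pos) from rfl]
    rw [hg1 0 (by omega), List.head?_eq_getElem?,
      List.getElem?_eq_getElem (by omega : 0 < n)]
    exact congrArg some (List.getD_eq_getElem l d (by omega : (0:ℕ) < n))
  · have h3ne : l₃ ≠ [] := by
      intro h
      rw [h] at hlen3; simp at hlen3; omega
    have h3 : l₃.getLast? = l.getLast? := by
      rw [hl₃, List.getLast?_drop, if_neg (by omega)]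
    rw [List.getLast?_append, List.getLast?_append, h3]
    cases h : l.getLast? with
    | none =>
      rw [List.getLast?_eq_getElem?, List.getElem?_eq_getElem (by omega : n - 1 < n)] at h
      simp at h
    | some a => rfl

lemma gdeg_eq [Fintype V] (G : SimpleGraph V) (w : V) :
    gdeg G w = (G.neighborFinset w).card := by
  classical
  rw [gdeg, SimpleGraph.neighborFinset_def, Set.ncard_eq_toFinset_card']

lemma HamList.reverse {G : SimpleGraph V} {x y : V} {l : List V} (h : HamList G x y l) :
    HamList G y x l.reverse := by
  obtain ⟨hc, hnd, hmem, hhd, hlast⟩ := h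
  refine ⟨?_, List.nodup_reverse.2 hnd, fun w => List.mem_reverse.2 (hmem w), ?_, ?_⟩
  · show List.IsChain G.Adj l.reverse
    rw [List.isChain_reverse]
    exact List.IsChain.imp (fun a b hab => hab.symm) hc
  · rw [List.head?_reverse]; exact hlast
  · rw [List.getLast?_reverse]; exact hhd

lemma length_eq_card [Fintype V] {l : List V} (hnd : l.Nodup) (hmem : ∀ w, w ∈ l) :
    l.length = Fintype.card V := by
  classical
  have h1 : l.toFinset = Finset.univ := Finset.eq_univ_iff_forall.2 fun w => by
    simpa using hmem w
  rw [← List.toFinset_card_of_nodup hnd, h1, Finset.card_univ]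

lemma aux [Fintype V] (H : SimpleGraph V) (u v : V)
    (hdeg : Fintype.card V + 1 ≤ gdeg H u + gdeg H v)
    (x y : V) (l : List V) (d : V)
    (hnd : l.Nodup) (hmem : ∀ w, w ∈ l)
    (hhd : l.head? = some x) (hlast : l.getLast? = some y)
    (j : ℕ) (hj : j + 1 < l.length)
    (hu : l.getD j d = u) (hv : l.getD (j+1) d = v)
    (hH : ∀ t, t + 1 < l.length → t ≠ j → H.Adj (l.getD t d) (l.getD (t+1) d)) :
    ∃ l', HamList H x y l' := by
  classical
  set n := l.length with hn
  have hcard : n = Fintype.card V := length_eq_card hnd hmem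
  set g : ℕ → V := fun i => l.getD i d with hgdef
  have hginj : ∀ i j₂, i < n → j₂ < n → g i = g j₂ → i = j₂ := by
    intro i j₂ hi hj₂ hg
    rw [hgdef] at hg
    simp only [List.getD_eq_getElem l d hi, List.getD_eq_getElem l d hj₂] at hg
    exact (hnd.getElem_inj_iff).1 hg
  have hgsurj : ∀ w : V, ∃ i, i < n ∧ g i = w := by
    intro w
    obtain ⟨i, hi, hgi⟩ := List.mem_iff_getElem.1 (hmem w)
    exact ⟨i, hi, by rw [hgdef]; simp only [List.getD_eq_getElem l d hi]; exact hgi⟩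
  -- the two counting sets
  set S : Finset ℕ := (Finset.range (n-1)).filter (fun i => H.Adj u (g i)) with hS
  set T : Finset ℕ := (Finset.range (n-1)).filter (fun i => H.Adj v (g (i+1))) with hT
  -- index of a vertex
  have hidx : ∀ w : V, l.idxOf w < n ∧ g (l.idxOf w) = w := by
    intro w
    have h1 : l.idxOf w < l.length := List.idxOf_lt_length_iff.2 (hmem w)
    refine ⟨h1, ?_⟩
    rw [hgdef]
    simp only [List.getD_eq_getElem l d h1]
    exact List.getElem_idxOf h1
  have hScard : gdeg H u ≤ S.card + 1 := by
    rw [gdeg_eq]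
    have hmap : ∀ w ∈ (H.neighborFinset u).erase (g (n-1)), l.idxOf w ∈ S := by
      intro w hw
      obtain ⟨hw1, hw2⟩ := Finset.mem_erase.1 hw
      obtain ⟨hi1, hi2⟩ := hidx w
      have hne' : l.idxOf w ≠ n - 1 := by
        intro h
        exact hw1 (by rw [← hi2, h])
      rw [hS, Finset.mem_filter, Finset.mem_range]
      refine ⟨by omega, ?_⟩
      rw [hi2]
      exact (SimpleGraph.mem_neighborFinset _ _ _).1 hw2
    have hinj : Set.InjOn (fun w => l.idxOf w) ((H.neighborFinset u).erase (g (n-1)) : Set V) := by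
      intro a _ b _ hab
      have ha := (hidx a).2
      have hb := (hidx b).2
      rw [← ha, ← hb]
      simp only at hab
      rw [hab]
    have := Finset.card_le_card_of_injOn _ hmap hinj
    by_cases hmem' : g (n-1) ∈ H.neighborFinset u
    · rw [Finset.card_erase_of_mem hmem'] at this
      omega
    · rw [Finset.erase_eq_of_notMem hmem'] at this
      omega
  have hTcard : gdeg H v ≤ T.card + 1 := by
    rw [gdeg_eq]
    have hmap : ∀ w ∈ (H.neighborFinset v).erase (g 0), l.idxOf w - 1 ∈ T := by
      intro w hw
      obtain ⟨hw1, hw2⟩ := Finset.mem_erase.1 hw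
      obtain ⟨hi1, hi2⟩ := hidx w
      have hne' : l.idxOf w ≠ 0 := by
        intro h
        exact hw1 (by rw [← hi2, h])
      rw [hT, Finset.mem_filter, Finset.mem_range]
      refine ⟨by omega, ?_⟩
      rw [show l.idxOf w - 1 + 1 = l.idxOf w from by omega, hi2]
      exact (SimpleGraph.mem_neighborFinset _ _ _).1 hw2
    have hinj : Set.InjOn (fun w => l.idxOf w - 1) ((H.neighborFinset v).erase (g 0) : Set V) := by
      intro a ha' b hb' hab
      obtain ⟨ha1, _⟩ := Finset.mem_erase.1 (by exact_mod_cast ha')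
      obtain ⟨hb1, _⟩ := Finset.mem_erase.1 (by exact_mod_cast hb')
      have ha := (hidx a).2
      have hb := (hidx b).2
      have hane : l.idxOf a ≠ 0 := fun h => ha1 (by rw [← ha, h])
      have hbne : l.idxOf b ≠ 0 := fun h => hb1 (by rw [← hb, h])
      simp only at hab
      rw [← ha, ← hb]
      congr 1
      omega
    have := Finset.card_le_card_of_injOn _ hmap hinj
    by_cases hmem' : g 0 ∈ H.neighborFinset v
    · rw [Finset.card_erase_of_mem hmem'] at this
      omega
    · rw [Finset.erase_eq_of_notMem hmem'] at this
      omega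
  have hu' : g j = u := hu
  have hv' : g (j+1) = v := hv
  have hjS : j ∉ S := by
    rw [hS, Finset.mem_filter]
    rintro ⟨-, h⟩
    rw [hu'] at h
    exact H.loopless.irrefl u h
  have hjT : j ∉ T := by
    rw [hT, Finset.mem_filter]
    rintro ⟨-, h⟩
    rw [hv'] at h
    exact H.loopless.irrefl v h
  have hsub : S ∪ T ⊆ (Finset.range (n-1)).erase j := by
    intro t ht
    rcases Finset.mem_union.1 ht with h | h
    · rw [Finset.mem_erase]
      exact ⟨fun he => hjS (he ▸ h), Finset.mem_of_mem_filter t h⟩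
    · rw [Finset.mem_erase]
      exact ⟨fun he => hjT (he ▸ h), Finset.mem_of_mem_filter t h⟩
  have hjrange : j ∈ Finset.range (n-1) := Finset.mem_range.2 (by omega)
  have hUcard : (S ∪ T).card ≤ n - 2 := by
    have := Finset.card_le_card hsub
    rw [Finset.card_erase_of_mem hjrange, Finset.card_range] at this
    omega
  have hIcard : 0 < (S ∩ T).card := by
    have h1 := Finset.card_union_add_card_inter S T
    omega
  obtain ⟨i, hi⟩ := Finset.card_pos.1 hIcard
  rw [Finset.mem_inter] at hi
  obtain ⟨hiS, hiT⟩ := hi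
  have hiu : H.Adj u (g i) := (Finset.mem_filter.1 hiS).2
  have hiv : H.Adj v (g (i+1)) := (Finset.mem_filter.1 hiT).2
  have hirange : i < n - 1 := Finset.mem_range.1 (Finset.mem_filter.1 hiS).1
  have hij : i ≠ j := fun h => hjS (h ▸ hiS)
  rcases Nat.lt_or_ge i j with hlt | hge
  · -- i < j : rotate with p = i, q = j
    obtain ⟨l', hc', hperm, hhd', hlast'⟩ := rotate_lemma H l d i j hlt hj
      (fun t ht => hH t (by omega) (by omega))
      (by rw [hu]; exact hiu.symm)
      (fun t h1 h2 => (hH t (by omega) (by omega)).symm)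
      (by rw [hv]; exact hiv.symm)
      (fun t h1 h2 => hH t h2 (by omega))
    exact ⟨l', hc', hperm.nodup_iff.2 hnd, fun w => hperm.mem_iff.2 (hmem w),
      hhd' ▸ hhd ▸ rfl, hlast' ▸ hlast ▸ rfl⟩
  · -- j < i : rotate with p = j, q = i
    have hji : j < i := by omega
    obtain ⟨l', hc', hperm, hhd', hlast'⟩ := rotate_lemma H l d j i hji (by omega)
      (fun t ht => hH t (by omega) (by omega))
      (by rw [hu]; exact hiu)
      (fun t h1 h2 => (hH t (by omega) (by omega)).symm)
      (by rw [hv]; exact hiv)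
      (fun t h1 h2 => hH t h2 (by omega))
    exact ⟨l', hc', hperm.nodup_iff.2 hnd, fun w => hperm.mem_iff.2 (hmem w),
      hhd' ▸ hhd ▸ rfl, hlast' ▸ hlast ▸ rfl⟩

lemma step_back_list [Fintype V] (H : SimpleGraph V) (u v : V)
    (hdeg : Fintype.card V + 1 ≤ gdeg H u + gdeg H v)
    (x y : V) (l : List V) (hl : HamList (H ⊔ SimpleGraph.edge u v) x y l) :
    ∃ l', HamList H x y l' := by
  classical
  obtain ⟨hc, hnd, hmem, hhd, hlast⟩ := hl
  by_cases hch : l.Chain' H.Adj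
  · exact ⟨l, hch, hnd, hmem, hhd, hlast⟩
  change ¬ List.IsChain H.Adj l at hch
  rw [List.isChain_iff_getElem] at hch
  push_neg at hch
  obtain ⟨j, hj, hbad⟩ := hch
  have hjlen : j + 1 < l.length := by omega
  change List.IsChain (H ⊔ SimpleGraph.edge u v).Adj l at hc
  rw [List.isChain_iff_getElem] at hc
  have hsup := hc j hj
  rw [SimpleGraph.sup_adj] at hsup
  rcases hsup with hsup | hsup
  · exact absurd hsup hbad
  rw [SimpleGraph.edge_adj] at hsup
  obtain ⟨hor, -⟩ := hsup
  -- the bad position is unique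
  have hH : ∀ t, t + 1 < l.length → t ≠ j → H.Adj (l.getD t u) (l.getD (t+1) u) := by
    intro t ht htj
    rw [List.getD_eq_getElem l u (by omega), List.getD_eq_getElem l u ht]
    by_contra hcon
    have hsup' := hc t (by omega)
    rw [SimpleGraph.sup_adj] at hsup'
    rcases hsup' with h' | h'
    · exact hcon h'
    rw [SimpleGraph.edge_adj] at h'
    obtain ⟨hor', -⟩ := h'
    rcases hor with ⟨h1, h2⟩ | ⟨h1, h2⟩ <;> rcases hor' with ⟨h3, h4⟩ | ⟨h3, h4⟩
    · exact htj (hnd.getElem_inj_iff.1 (h3.trans h1.symm))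
    · have e1 : t = j + 1 := hnd.getElem_inj_iff.1 (h3.trans h2.symm)
      have e2 : t + 1 = j := hnd.getElem_inj_iff.1 (h4.trans h1.symm)
      omega
    · have e1 : t = j + 1 := hnd.getElem_inj_iff.1 (h3.trans h2.symm)
      have e2 : t + 1 = j := hnd.getElem_inj_iff.1 (h4.trans h1.symm)
      omega
    · exact htj (hnd.getElem_inj_iff.1 (h3.trans h1.symm))
  rcases hor with ⟨h1, h2⟩ | ⟨h1, h2⟩
  · -- l[j] = u, l[j+1] = v
    exact aux H u v hdeg x y l u hnd hmem hhd hlast j hjlen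
      (by rw [List.getD_eq_getElem l u (by omega)]; exact h1)
      (by rw [List.getD_eq_getElem l u hjlen]; exact h2) hH
  · -- l[j] = v, l[j+1] = u : work with the reversed list
    have hrevlen : l.reverse.length = l.length := List.length_reverse
    have hrevget : ∀ i (h : i < l.length), l.reverse.getD i u = l.getD (l.length - 1 - i) u := by
      intro i h
      rw [List.getD_eq_getElem l.reverse u (by omega),
        List.getD_eq_getElem l u (by omega : l.length - 1 - i < l.length)]
      exact List.getElem_reverse _
    obtain ⟨l'', hl''⟩ := aux H u v hdeg y x l.reverse u
      (List.nodup_reverse.2 hnd) (fun w => List.mem_reverse.2 (hmem w))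
      (by rw [List.head?_reverse]; exact hlast)
      (by rw [List.getLast?_reverse]; exact hhd)
      (l.length - j - 2) (by omega)
      (by
        rw [hrevget _ (by omega), show l.length - 1 - (l.length - j - 2) = j + 1 from by omega,
          List.getD_eq_getElem l u hjlen]
        exact h2)
      (by
        rw [hrevget _ (by omega), show l.length - 1 - (l.length - j - 2 + 1) = j from by omega,
          List.getD_eq_getElem l u (by omega)]
        exact h1)
      (by
        intro t ht htj
        rw [hrevlen] at ht
        rw [hrevget _ (by omega), hrevget _ (by omega)]
        have hs : l.length - 1 - (t+1) + 1 = l.length - 1 - t := by omega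
        have := hH (l.length - 1 - (t+1)) (by omega) (by omega)
        rw [hs] at this
        exact this.symm)
    exact ⟨l''.reverse, hl''.reverse⟩

lemma step_back [Fintype V] (H : SimpleGraph V) (u v : V)
    (hdeg : Fintype.card V + 1 ≤ gdeg H u + gdeg H v)
    (h : HamConnected (H ⊔ SimpleGraph.edge u v)) : HamConnected H := by
  intro x y hxy
  obtain ⟨l, hl⟩ := (hamList_iff (H ⊔ SimpleGraph.edge u v) x y hxy).2 (h x y hxy)
  obtain ⟨l', hl'⟩ := step_back_list H u v hdeg x y l hl
  exact (hamList_iff H x y hxy).1 ⟨l', hl'⟩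

lemma gdeg_mono [Fintype V] {G H : SimpleGraph V} (hGH : G ≤ H) (w : V) :
    gdeg G w ≤ gdeg H w := by
  classical
  rw [gdeg_eq, gdeg_eq]
  apply Finset.card_le_card
  intro a ha
  rw [SimpleGraph.mem_neighborFinset] at ha ⊢
  exact hGH ha

lemma ham_mono {G H : SimpleGraph V} (hGH : G ≤ H) (h : HamConnected G) :
    HamConnected H := by
  intro x y hxy
  obtain ⟨l, hc, hnd, hmem, hhd, hlast⟩ := (hamList_iff G x y hxy).2 (h x y hxy)
  exact (hamList_iff H x y hxy).1 ⟨l, hc.imp (fun a b hab => hGH hab), hnd, hmem, hhd, hlast⟩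

lemma back [Fintype V] : ∀ (k : ℕ) (G H : SimpleGraph V),
    H.edgeSet.ncard - G.edgeSet.ncard = k → G ≤ H →
    (∀ a b, H.Adj a b → ¬G.Adj a b → Fintype.card V + 1 ≤ gdeg G a + gdeg G b) →
    HamConnected H → HamConnected G := by
  classical
  intro k
  induction k with
  | zero =>
    intro G H hk hGH _ hH
    have hsub : G.edgeSet ⊆ H.edgeSet := SimpleGraph.edgeSet_subset_edgeSet.2 hGH
    have hfin : H.edgeSet.Finite := H.edgeSet.toFinite
    have hle : G.edgeSet.ncard ≤ H.edgeSet.ncard := Set.ncard_le_ncard hsub hfin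
    have heq : G.edgeSet = H.edgeSet :=
      Set.eq_of_subset_of_ncard_le hsub (by omega) hfin
    rw [SimpleGraph.edgeSet_inj.1 heq]
    exact hH
  | succ k ih =>
    intro G H hk hGH hcond hH
    by_cases hGHeq : G = H
    · rw [hGHeq]; exact hH
    have hlt : ¬ (H ≤ G) := fun h => hGHeq (le_antisymm hGH h)
    have hex : ∃ a b, H.Adj a b ∧ ¬ G.Adj a b := by
      by_contra hcon
      push_neg at hcon
      exact hlt fun {a b} hab => hcon a b hab
    obtain ⟨a, b, hab, hnab⟩ := hex
    have hne : a ≠ b := H.ne_of_adj hab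
    have hG'le : G ⊔ SimpleGraph.edge a b ≤ H := by
      refine sup_le hGH fun c d hcd => ?_
      rw [SimpleGraph.edge_adj] at hcd
      rcases hcd.1 with ⟨rfl, rfl⟩ | ⟨rfl, rfl⟩
      · exact hab
      · exact hab.symm
    have hcard : (G ⊔ SimpleGraph.edge a b).edgeSet.ncard = G.edgeSet.ncard + 1 := by
      rw [SimpleGraph.edgeSet_sup, SimpleGraph.edge_edgeSet_of_ne hne, Set.union_singleton,
        Set.ncard_insert_of_notMem (fun h => hnab ((SimpleGraph.mem_edgeSet G).1 h))
          G.edgeSet.toFinite]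
    have hcard2 : H.edgeSet.ncard - (G ⊔ SimpleGraph.edge a b).edgeSet.ncard = k := by
      have hsub := Set.ncard_le_ncard (SimpleGraph.edgeSet_subset_edgeSet.2 hG'le)
        H.edgeSet.toFinite
      omega
    have hcond' : ∀ c d, H.Adj c d → ¬(G ⊔ SimpleGraph.edge a b).Adj c d →
        Fintype.card V + 1 ≤ gdeg (G ⊔ SimpleGraph.edge a b) c + gdeg (G ⊔ SimpleGraph.edge a b) d := by
      intro c d hcd hncd
      have hncd2 : ¬ G.Adj c d := fun h => hncd ((SimpleGraph.sup_adj _ _ _ _).2 (Or.inl h))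
      calc Fintype.card V + 1 ≤ gdeg G c + gdeg G d := hcond c d hcd hncd2
        _ ≤ gdeg (G ⊔ SimpleGraph.edge a b) c + gdeg (G ⊔ SimpleGraph.edge a b) d :=
          Nat.add_le_add (gdeg_mono le_sup_left c) (gdeg_mono le_sup_left d)
    have hG' : HamConnected (G ⊔ SimpleGraph.edge a b) :=
      ih (G ⊔ SimpleGraph.edge a b) H hcard2 hG'le hcond' hH
    exact step_back G a b (hcond a b hab hnab) hG'

lemma le_iterate [Fintype V] (k m : ℕ) (G : SimpleGraph V) :
    G ≤ (closureStep k)^[m] G := by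
  induction m with
  | zero => exact le_refl G
  | succ m ih =>
    rw [Function.iterate_succ_apply']
    exact le_trans ih le_sup_left

lemma back_iterate [Fintype V] : ∀ (m : ℕ) (G : SimpleGraph V),
    HamConnected ((closureStep (Fintype.card V + 1))^[m] G) → HamConnected G := by
  intro m
  induction m with
  | zero => exact fun G h => h
  | succ m ih =>
    intro G h
    rw [Function.iterate_succ_apply] at h
    have h1 : HamConnected (closureStep (Fintype.card V + 1) G) := ih _ h
    refine back _ G (closureStep (Fintype.card V + 1) G) rfl le_sup_left ?_ h1
    intro a b hab hnab
    rcases (SimpleGraph.sup_adj _ _ _ _).1 hab with h' | h'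
    · exact absurd h' hnab
    · rw [SimpleGraph.fromRel_adj] at h'
      rcases h'.2 with ⟨-, hle⟩ | ⟨-, hle⟩
      · exact hle
      · omega


end BC

/-- **Bondy–Chvátal (Lemma 2.2).** A graph `G` of order `n` is Hamilton-connected if and only if
its `(n+1)`-closure is Hamilton-connected. -/
theorem hamConnected_iff_closure {V : Type*} [Fintype V] (G : SimpleGraph V) :
    HamConnected G ↔ HamConnected (kClosure (Fintype.card V + 1) G) := by
  constructor
  · exact fun h => BC.ham_mono (BC.le_iterate (Fintype.card V + 1) (Fintype.card V * Fintype.card V) G) h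
  · exact fun h => BC.back_iterate (Fintype.card V * Fintype.card V) G h

end
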